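/- Under the same setup with p > 1 and |f'|^{p/(p-1)} preinvex: |(1/η(b,a)) ∫_a^{a+η(b,a)} f(x) dx − f((2a+η(b,a))/2)| ≤ (η(b,a)/16)(4/(p+1))^{1/p} (3^{(p-1)/p} + 1)(|f'(a)| + |f'(b)|). -/

import Mathlib

open MeasureTheory intervalIntegral

lemma aux_subadd {x y s : ℝ} (hx : 0 ≤ x) (hy : 0 ≤ y) (hs0 : 0 ≤ s) (hs1 : s ≤ 1) :
    (x + y) ^ s ≤ x ^ s + y ^ s := by
  lift x to NNReal using hx
  lift y to NNReal using hy
  exact_mod_cast NNReal.rpow_add_le_add_rpow x y hs0 hs1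

lemma aux_const {p : ℝ} (hp : 1 < p) :
    ((1 / 2 : ℝ) ^ (p + 1) / (p + 1)) ^ (1 / p) * ((1 : ℝ) / 8) ^ ((p - 1) / p)
      = (1 / 16) * (4 / (p + 1)) ^ (1 / p) := by
  have hp0 : (0 : ℝ) < p := by linarith
  have hp1 : (0 : ℝ) < p + 1 := by linarith
  have hhalf : (0 : ℝ) < (1/2 : ℝ) ^ (p + 1) := Real.rpow_pos_of_pos (by norm_num) _
  have hL : 0 < ((1 / 2 : ℝ) ^ (p + 1) / (p + 1)) ^ (1 / p) * ((1 : ℝ) / 8) ^ ((p - 1) / p) :=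
    mul_pos (Real.rpow_pos_of_pos (div_pos hhalf hp1) _) (Real.rpow_pos_of_pos (by norm_num) _)
  have hR : 0 < (1 / 16 : ℝ) * (4 / (p + 1)) ^ (1 / p) :=
    mul_pos (by norm_num) (Real.rpow_pos_of_pos (div_pos (by norm_num) hp1) _)
  have := Real.log_injOn_pos (Set.mem_Ioi.2 hL) (Set.mem_Ioi.2 hR)
  apply this
  rw [Real.log_mul (ne_of_gt (Real.rpow_pos_of_pos (div_pos hhalf hp1) _)) (by positivity),
    Real.log_mul (by norm_num) (by positivity),
    Real.log_rpow (div_pos hhalf hp1), Real.log_rpow (by norm_num),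
    Real.log_rpow (div_pos (by norm_num) hp1),
    Real.log_div (ne_of_gt hhalf) (ne_of_gt hp1),
    Real.log_div (by norm_num) (ne_of_gt hp1),
    Real.log_div (by norm_num) (by norm_num),
    Real.log_rpow (by norm_num)]
  have l2 : Real.log (1/2) = -Real.log 2 := by
    rw [Real.log_div one_ne_zero (by norm_num), Real.log_one]; ring
  have l8 : Real.log 8 = 3 * Real.log 2 := by
    rw [show (8:ℝ) = 2^(3:ℕ) by norm_num, Real.log_pow]; push_cast; ring
  have l16 : Real.log (1/16) = -(4 * Real.log 2) := by
    rw [Real.log_div one_ne_zero (by norm_num), Real.log_one,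
      show (16:ℝ) = 2^(4:ℕ) by norm_num, Real.log_pow]; push_cast; ring
  have l4 : Real.log 4 = 2 * Real.log 2 := by
    rw [show (4:ℝ) = 2^(2:ℕ) by norm_num, Real.log_pow]; push_cast; ring
  rw [l2, l8, l16, l4]
  field_simp
  simp only [Real.log_one]
  ring

theorem hh_left_preinvex_pow_deriv_simplified
    (K : Set ℝ) (hK : IsOpen K) (η : ℝ → ℝ → ℝ)
    (f f' : ℝ → ℝ) (a b : ℝ) (p : ℝ) (hp : 1 < p)
    (hinvex : ∀ t ∈ Set.Icc (0 : ℝ) 1, a + t * η b a ∈ K)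
    (hf : ∀ x ∈ K, HasDerivAt f (f' x) x)
    (hη : 0 < η b a)
    (hpre : ∀ t ∈ Set.Icc (0 : ℝ) 1,
      |f' (a + t * η b a)| ^ (p / (p - 1))
        ≤ (1 - t) * |f' a| ^ (p / (p - 1)) + t * |f' b| ^ (p / (p - 1))) :
    |(1 / η b a) * (∫ x in a..(a + η b a), f x) - f ((2 * a + η b a) / 2)|
      ≤ (η b a / 16) * (4 / (p + 1)) ^ (1 / p) * ((3 : ℝ) ^ ((p - 1) / p) + 1) *
        (|f' a| + |f' b|) := by
  set c := η b a with hcdef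
  set q : ℝ := p / (p - 1) with hqdef
  have hpq : p.HolderConjugate q := Real.HolderConjugate.conjExponent hp
  have hq1 : 1 < q := hpq.symm.lt
  have hq0 : (0:ℝ) < q := by linarith
  have hp0 : (0:ℝ) < p := by linarith
  set A := |f' a| ^ q with hAdef
  set B := |f' b| ^ q with hBdef
  have hA0 : 0 ≤ A := Real.rpow_nonneg (abs_nonneg _) _
  have hB0 : 0 ≤ B := Real.rpow_nonneg (abs_nonneg _) _
  set g : ℝ → ℝ := fun t => f (a + t * c) with hgdef
  set φ : ℝ → ℝ := fun t => deriv f (a + t * c) with hφdef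
  set U : Set ℝ := (fun t : ℝ => a + t * c) ⁻¹' K with hUdef
  have hUopen : IsOpen U := hK.preimage (by continuity)
  have hIccU : Set.Icc (0:ℝ) 1 ⊆ U := fun t ht => hinvex t ht
  have hgderiv : ∀ t ∈ U, HasDerivAt g (f' (a + t * c) * c) t := by
    intro t ht
    have h1 : HasDerivAt (fun t : ℝ => a + t * c) c t := by
      simpa using ((hasDerivAt_id t).mul_const c).const_add a
    exact (hf _ ht).comp t h1
  have hgcont : ContinuousOn g U := fun t ht => ((hgderiv t ht).continuousAt).continuousWithinAt
  have hφeq : ∀ t ∈ Set.Icc (0:ℝ) 1, f' (a + t * c) = φ t := by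
    intro t ht
    rw [hφdef]; simp only []
    rw [(hf _ (hinvex t ht)).deriv]
  have hφmeas : Measurable φ :=
    (measurable_deriv f).comp (by fun_prop)
  set M : ℝ := (A + B) ^ (1/q) with hMdef
  have hM0 : 0 ≤ M := Real.rpow_nonneg (by linarith) _
  have hMbound : ∀ t ∈ Set.Icc (0:ℝ) 1, |f' (a + t * c)| ≤ M := by
    intro t ht
    have h1 : |f' (a + t * c)| ^ q ≤ A + B := by
      have := hpre t ht
      nlinarith [ht.1, ht.2, hA0, hB0, abs_nonneg (f' (a + t*c))]
    calc |f' (a + t * c)| = (|f' (a + t * c)| ^ q) ^ (1/q) := by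
          rw [← Real.rpow_mul (abs_nonneg _), mul_one_div_cancel hq0.ne', Real.rpow_one]
      _ ≤ M := Real.rpow_le_rpow (Real.rpow_nonneg (abs_nonneg _) _) h1 (by positivity)
  -- integrability of weighted |f'| compositions
  have hintW : ∀ (w : ℝ → ℝ), Measurable w → (∀ t ∈ Set.Icc (0:ℝ) 1, |w t| ≤ 1) →
      ∀ u v : ℝ, 0 ≤ u → u ≤ v → v ≤ 1 →
      IntervalIntegrable (fun t => w t * (f' (a + t * c) * c)) volume u v := by
    intro w hw hwb u v hu huv hv1
    rw [intervalIntegrable_iff_integrableOn_Ioc_of_le huv]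
    have hsub : Set.Ioc u v ⊆ Set.Icc (0:ℝ) 1 :=
      fun t ht => ⟨le_trans hu (le_of_lt ht.1), le_trans ht.2 hv1⟩
    have hmeas : AEStronglyMeasurable (fun t => w t * (f' (a + t * c) * c))
        (volume.restrict (Set.Ioc u v)) := by
      refine AEStronglyMeasurable.congr
        ((hw.mul (hφmeas.mul_const c)).aestronglyMeasurable) ?_
      rw [Filter.EventuallyEq, ae_restrict_iff' measurableSet_Ioc]
      exact Filter.Eventually.of_forall fun t ht => by rw [hφeq t (hsub ht)]; rfl
    refine Integrable.mono' (g := fun _ => M * c) (integrableOn_const measure_Ioc_lt_top.ne) hmeas ?_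
    rw [ae_restrict_iff' measurableSet_Ioc]
    refine Filter.Eventually.of_forall fun t ht => ?_
    have h1 : |w t| ≤ 1 := hwb t (hsub ht)
    have h2 : |f' (a + t * c)| ≤ M := hMbound t (hsub ht)
    calc ‖w t * (f' (a + t * c) * c)‖ = |w t| * (|f' (a + t * c)| * |c|) := by
          rw [Real.norm_eq_abs, abs_mul, abs_mul]
      _ ≤ 1 * (M * |c|) := by
          apply mul_le_mul h1 (mul_le_mul_of_nonneg_right h2 (abs_nonneg _)) (by positivity)
            zero_le_one
      _ = M * c := by rw [one_mul, abs_of_pos hη]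
  have hGqint : ∀ u v : ℝ, 0 ≤ u → u ≤ v → v ≤ 1 →
      IntervalIntegrable (fun t => |f' (a + t * c)| ^ q) volume u v := by
    intro u v hu huv hv1
    rw [intervalIntegrable_iff_integrableOn_Ioc_of_le huv]
    have hsub : Set.Ioc u v ⊆ Set.Icc (0:ℝ) 1 :=
      fun t ht => ⟨le_trans hu (le_of_lt ht.1), le_trans ht.2 hv1⟩
    have hmeas : AEStronglyMeasurable (fun t => |f' (a + t * c)| ^ q)
        (volume.restrict (Set.Ioc u v)) := by
      refine AEStronglyMeasurable.congr
        (((Real.continuous_rpow_const hq0.le).measurable.comp hφmeas.abs).aestronglyMeasurable) ?_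
      rw [Filter.EventuallyEq, ae_restrict_iff' measurableSet_Ioc]
      refine Filter.Eventually.of_forall fun t ht => ?_
      simp only [Function.comp_apply]
      rw [hφeq t (hsub ht)]
    refine Integrable.mono' (g := fun _ => A + B) (integrableOn_const measure_Ioc_lt_top.ne) hmeas ?_
    rw [ae_restrict_iff' measurableSet_Ioc]
    refine Filter.Eventually.of_forall fun t ht => ?_
    have h2 := hpre t (hsub ht)
    have ht' := hsub ht
    rw [Real.norm_eq_abs, abs_of_nonneg (Real.rpow_nonneg (abs_nonneg _) _)]
    show |f' (a + t * c)| ^ q ≤ A + B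
    nlinarith [ht'.1, ht'.2, hA0, hB0]
  have hgint : ∀ u v : ℝ, u ∈ Set.Icc (0:ℝ) 1 → v ∈ Set.Icc (0:ℝ) 1 →
      IntervalIntegrable g volume u v := by
    intro u v hu hv
    exact (hgcont.mono (le_trans (Set.uIcc_subset_Icc hu hv) hIccU)).intervalIntegrable
  have hFTC : ∀ t ∈ Set.Icc (0:ℝ) 1, HasDerivAt (fun u => ∫ s in (0:ℝ)..u, g s) (g t) t := by
    intro t ht
    exact intervalIntegral.integral_hasDerivAt_right
      (hgint 0 t (by norm_num) ht)
      (ContinuousOn.stronglyMeasurableAtFilter hUopen hgcont t (hIccU ht))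
      (hgcont.continuousAt (hUopen.mem_nhds (hIccU ht)))
  have hadj : (∫ s in (0:ℝ)..(1/2:ℝ), g s) + ∫ s in (1/2:ℝ)..(1:ℝ), g s
      = ∫ s in (0:ℝ)..(1:ℝ), g s :=
    intervalIntegral.integral_add_adjacent_intervals
      (hgint 0 (1/2) (by norm_num) (by norm_num)) (hgint (1/2) 1 (by norm_num) (by norm_num))
  have hI1 : ∫ t in (0:ℝ)..(1/2:ℝ), t * (f' (a + t * c) * c)
      = (1/2 : ℝ) * g (1/2) - ∫ s in (0:ℝ)..(1/2:ℝ), g s := by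
    have h := intervalIntegral.integral_eq_sub_of_hasDerivAt
      (f := fun t => t * g t - ∫ s in (0:ℝ)..t, g s)
      (f' := fun t => t * (f' (a + t * c) * c)) (a := 0) (b := 1/2) ?_ ?_
    · rw [h]; simp
    · intro t ht
      rw [Set.uIcc_of_le (by norm_num : (0:ℝ) ≤ 1/2)] at ht
      have htI : t ∈ Set.Icc (0:ℝ) 1 := ⟨ht.1, le_trans ht.2 (by norm_num)⟩
      have h1 := (hasDerivAt_id t).mul (hgderiv t (hIccU htI))
      have h2 := h1.sub (hFTC t htI)
      convert h2 using 1
      · rfl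
      simp only [id_eq]; ring
    · exact hintW (fun t => t) measurable_id
        (fun t ht => by rw [abs_of_nonneg ht.1]; exact ht.2) 0 (1/2) le_rfl (by norm_num)
        (by norm_num)
  have hI2 : ∫ t in (1/2:ℝ)..(1:ℝ), (t - 1) * (f' (a + t * c) * c)
      = (1/2 : ℝ) * g (1/2) - ∫ s in (1/2:ℝ)..(1:ℝ), g s := by
    have h := intervalIntegral.integral_eq_sub_of_hasDerivAt
      (f := fun t => (t - 1) * g t - ∫ s in (0:ℝ)..t, g s)
      (f' := fun t => (t - 1) * (f' (a + t * c) * c)) (a := 1/2) (b := 1) ?_ ?_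
    · rw [h, ← hadj]; ring
    · intro t ht
      rw [Set.uIcc_of_le (by norm_num : (1/2:ℝ) ≤ 1)] at ht
      have htI : t ∈ Set.Icc (0:ℝ) 1 := ⟨le_trans (by norm_num) ht.1, ht.2⟩
      have h1 := ((hasDerivAt_id t).sub_const 1).mul (hgderiv t (hIccU htI))
      have h2 := h1.sub (hFTC t htI)
      convert h2 using 1
      · rfl
      simp only [id_eq]; ring
    · exact hintW (fun t => t - 1) (by fun_prop)
        (fun t ht => by
          rw [abs_le]
          exact ⟨by show (-1:ℝ) ≤ t - 1; linarith [ht.1], by show t - 1 ≤ 1; linarith [ht.2]⟩)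
        (1/2) 1 (by norm_num) (by norm_num) le_rfl
  have hmid : f ((2 * a + c) / 2) = g (1/2 : ℝ) := by
    simp only [hgdef]
    congr 1; ring
  have hchg : (1 / c) * (∫ x in a..(a + c), f x) = ∫ t in (0:ℝ)..1, g t := by
    have h1 : ∫ t in (0:ℝ)..1, g t = ∫ t in (0:ℝ)..1, f (c * t + a) := by
      apply intervalIntegral.integral_congr
      intro t ht
      simp only [hgdef]
      congr 1; ring
    rw [h1, intervalIntegral.integral_comp_mul_add f (ne_of_gt hη) a]
    simp only [mul_zero, zero_add, mul_one, smul_eq_mul]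
    rw [one_div, add_comm c a]
  have hIsum : (1 / c) * (∫ x in a..(a + c), f x) - f ((2 * a + c) / 2)
      = -((∫ t in (0:ℝ)..(1/2:ℝ), t * (f' (a + t * c) * c))
          + ∫ t in (1/2:ℝ)..(1:ℝ), (t - 1) * (f' (a + t * c) * c)) := by
    rw [hchg, hmid, hI1, hI2, ← hadj]; ring
  rw [hIsum, abs_neg]
  have hs : 1 / q = (p - 1) / p := by rw [hqdef, one_div_div]
  have hsq0 : 0 ≤ 1 / q := by positivity
  have hsq1 : 1 / q ≤ 1 := by rw [div_le_one hq0]; linarith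
  set D : ℝ := ((1/2 : ℝ) ^ (p + 1) / (p + 1)) with hDdef
  have hD0 : 0 < D := div_pos (Real.rpow_pos_of_pos (by norm_num) _) (by linarith)
  have hPder : ∀ t : ℝ, HasDerivAt (fun t => A * (t - t^2/2) + B * (t^2/2))
      ((1 - t) * A + t * B) t := by
    intro t
    have h2 : HasDerivAt (fun t : ℝ => t ^ 2) (2 * t) t := by
      simpa using hasDerivAt_pow 2 t
    have h3 := (((hasDerivAt_id t).sub (h2.div_const 2)).const_mul A).add
      ((h2.div_const 2).const_mul B)
    convert h3 using 1
    · rfl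
    · rfl
    · rfl
    ring
  have hquad : ∀ u v : ℝ, (∫ t in u..v, ((1 - t) * A + t * B))
      = (A * (v - v^2/2) + B * (v^2/2)) - (A * (u - u^2/2) + B * (u^2/2)) := by
    intro u v
    exact intervalIntegral.integral_eq_sub_of_hasDerivAt (fun t _ => hPder t)
      (Continuous.intervalIntegrable (by fun_prop) _ _)
  have hAs : A ^ (1/q) = |f' a| := by
    rw [hAdef, ← Real.rpow_mul (abs_nonneg _), mul_one_div_cancel hq0.ne', Real.rpow_one]
  have hBs : B ^ (1/q) = |f' b| := by
    rw [hBdef, ← Real.rpow_mul (abs_nonneg _), mul_one_div_cancel hq0.ne', Real.rpow_one]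
  -- first Hölder bound
  have hbound1 : |∫ t in (0:ℝ)..(1/2:ℝ), t * (f' (a + t * c) * c)|
      ≤ c * (D ^ (1/p) * ((3 * A + B)/8) ^ (1/q)) := by
    have h0 : |∫ t in (0:ℝ)..(1/2:ℝ), t * (f' (a + t * c) * c)|
        ≤ ∫ t in (0:ℝ)..(1/2:ℝ), |t * (f' (a + t * c) * c)| :=
      intervalIntegral.abs_integral_le_integral_abs (by norm_num)
    have h1 : (∫ t in (0:ℝ)..(1/2:ℝ), |t * (f' (a + t * c) * c)|)
        = c * ∫ t in (0:ℝ)..(1/2:ℝ), t * |f' (a + t * c)| := by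
      rw [← intervalIntegral.integral_const_mul]
      apply intervalIntegral.integral_congr
      intro t ht
      rw [Set.uIcc_of_le (by norm_num : (0:ℝ) ≤ 1/2)] at ht
      show |t * (f' (a + t * c) * c)| = c * (t * |f' (a + t * c)|)
      rw [abs_mul, abs_mul, abs_of_nonneg ht.1, abs_of_pos hη]
      ring
    haveI : IsFiniteMeasure (volume.restrict (Set.Ioc (0:ℝ) (1/2:ℝ))) :=
      ⟨by rw [Measure.restrict_apply_univ]; exact measure_Ioc_lt_top⟩
    have hsub : Set.Ioc (0:ℝ) (1/2:ℝ) ⊆ Set.Icc (0:ℝ) 1 :=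
      fun t ht => ⟨le_of_lt ht.1, le_trans ht.2 (by norm_num)⟩
    have hFmem : MemLp (fun t : ℝ => t) (ENNReal.ofReal p)
        (volume.restrict (Set.Ioc (0:ℝ) (1/2:ℝ))) := by
      apply MemLp.of_bound (measurable_id.aestronglyMeasurable) 1
      rw [ae_restrict_iff' measurableSet_Ioc]
      refine Filter.Eventually.of_forall fun t ht => ?_
      simp only [id_eq, Real.norm_eq_abs]
      rw [abs_of_nonneg (le_of_lt ht.1)]
      exact le_trans ht.2 (by norm_num)
    have hGmeas : AEStronglyMeasurable (fun t => |f' (a + t * c)|)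
        (volume.restrict (Set.Ioc (0:ℝ) (1/2:ℝ))) := by
      refine AEStronglyMeasurable.congr (hφmeas.abs.aestronglyMeasurable) ?_
      rw [Filter.EventuallyEq, ae_restrict_iff' measurableSet_Ioc]
      exact Filter.Eventually.of_forall fun t ht => by rw [hφeq t (hsub ht)]
    have hGmem : MemLp (fun t => |f' (a + t * c)|) (ENNReal.ofReal q)
        (volume.restrict (Set.Ioc (0:ℝ) (1/2:ℝ))) := by
      apply MemLp.of_bound hGmeas M
      rw [ae_restrict_iff' measurableSet_Ioc]
      refine Filter.Eventually.of_forall fun t ht => ?_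
      rw [Real.norm_eq_abs, abs_abs]
      exact hMbound t (hsub ht)
    have hf_nn : (0 : ℝ → ℝ) ≤ᵐ[volume.restrict (Set.Ioc (0:ℝ) (1/2:ℝ))] fun t : ℝ => t := by
      rw [Filter.EventuallyLE, ae_restrict_iff' measurableSet_Ioc]
      exact Filter.Eventually.of_forall fun t ht => le_of_lt ht.1
    have hg_nn : (0 : ℝ → ℝ) ≤ᵐ[volume.restrict (Set.Ioc (0:ℝ) (1/2:ℝ))]
        fun t => |f' (a + t * c)| :=
      Filter.Eventually.of_forall fun t => abs_nonneg _
    have hHold := MeasureTheory.integral_mul_le_Lp_mul_Lq_of_nonneg hpq hf_nn hg_nn hFmem hGmem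
    have e2 : (∫ t in Set.Ioc (0:ℝ) (1/2:ℝ), t ^ p) = D := by
      rw [← intervalIntegral.integral_of_le (by norm_num : (0:ℝ) ≤ 1/2),
        integral_rpow (Or.inl (by linarith : (-1:ℝ) < p)),
        Real.zero_rpow (by positivity : p + 1 ≠ 0), sub_zero, hDdef]
    have hGq_nn : 0 ≤ ∫ t in Set.Ioc (0:ℝ) (1/2:ℝ), |f' (a + t * c)| ^ q :=
      setIntegral_nonneg measurableSet_Ioc fun t _ => Real.rpow_nonneg (abs_nonneg _) _
    have e3 : (∫ t in Set.Ioc (0:ℝ) (1/2:ℝ), |f' (a + t * c)| ^ q) ≤ (3 * A + B)/8 := by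
      rw [← intervalIntegral.integral_of_le (by norm_num : (0:ℝ) ≤ 1/2)]
      calc (∫ t in (0:ℝ)..(1/2:ℝ), |f' (a + t * c)| ^ q)
          ≤ ∫ t in (0:ℝ)..(1/2:ℝ), ((1 - t) * A + t * B) :=
            intervalIntegral.integral_mono_on (by norm_num)
              (hGqint 0 (1/2) le_rfl (by norm_num) (by norm_num))
              (Continuous.intervalIntegrable (by fun_prop) _ _)
              (fun t ht => hpre t ⟨ht.1, le_trans ht.2 (by norm_num)⟩)
        _ = (3 * A + B)/8 := by rw [hquad]; ring
    calc |∫ t in (0:ℝ)..(1/2:ℝ), t * (f' (a + t * c) * c)|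
        ≤ ∫ t in (0:ℝ)..(1/2:ℝ), |t * (f' (a + t * c) * c)| := h0
      _ = c * ∫ t in (0:ℝ)..(1/2:ℝ), t * |f' (a + t * c)| := h1
      _ = c * ∫ t in Set.Ioc (0:ℝ) (1/2:ℝ), t * |f' (a + t * c)| := by
          rw [intervalIntegral.integral_of_le (by norm_num : (0:ℝ) ≤ 1/2)]
      _ ≤ c * ((∫ t in Set.Ioc (0:ℝ) (1/2:ℝ), t ^ p) ^ (1/p)
            * (∫ t in Set.Ioc (0:ℝ) (1/2:ℝ), |f' (a + t * c)| ^ q) ^ (1/q)) :=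
          mul_le_mul_of_nonneg_left hHold (le_of_lt hη)
      _ ≤ c * (D ^ (1/p) * ((3 * A + B)/8) ^ (1/q)) := by
          rw [e2]
          exact mul_le_mul_of_nonneg_left
            (mul_le_mul_of_nonneg_left
              (Real.rpow_le_rpow hGq_nn e3 (by positivity))
              (Real.rpow_nonneg hD0.le _)) (le_of_lt hη)
  have hbound2 : |∫ t in (1/2:ℝ)..(1:ℝ), (t - 1) * (f' (a + t * c) * c)|
      ≤ c * (D ^ (1/p) * ((A + 3 * B)/8) ^ (1/q)) := by
    have h0 : |∫ t in (1/2:ℝ)..(1:ℝ), (t - 1) * (f' (a + t * c) * c)|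
        ≤ ∫ t in (1/2:ℝ)..(1:ℝ), |(t - 1) * (f' (a + t * c) * c)| :=
      intervalIntegral.abs_integral_le_integral_abs (by norm_num)
    have h1 : (∫ t in (1/2:ℝ)..(1:ℝ), |(t - 1) * (f' (a + t * c) * c)|)
        = c * ∫ t in (1/2:ℝ)..(1:ℝ), (1 - t) * |f' (a + t * c)| := by
      rw [← intervalIntegral.integral_const_mul]
      apply intervalIntegral.integral_congr
      intro t ht
      rw [Set.uIcc_of_le (by norm_num : (1/2:ℝ) ≤ 1)] at ht
      show |(t - 1) * (f' (a + t * c) * c)| = c * ((1 - t) * |f' (a + t * c)|)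
      rw [abs_mul, abs_mul, abs_of_pos hη, abs_of_nonpos (by linarith [ht.2] : t - 1 ≤ 0)]
      ring
    haveI : IsFiniteMeasure (volume.restrict (Set.Ioc (1/2:ℝ) (1:ℝ))) :=
      ⟨by rw [Measure.restrict_apply_univ]; exact measure_Ioc_lt_top⟩
    have hsub : Set.Ioc (1/2:ℝ) (1:ℝ) ⊆ Set.Icc (0:ℝ) 1 :=
      fun t ht => ⟨le_trans (by norm_num) (le_of_lt ht.1), ht.2⟩
    have hFmem : MemLp (fun t : ℝ => 1 - t) (ENNReal.ofReal p)
        (volume.restrict (Set.Ioc (1/2:ℝ) (1:ℝ))) := by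
      apply MemLp.of_bound ((measurable_const.sub measurable_id).aestronglyMeasurable) 1
      rw [ae_restrict_iff' measurableSet_Ioc]
      refine Filter.Eventually.of_forall fun t ht => ?_
      simp only [Real.norm_eq_abs, id_eq, Pi.sub_apply]
      rw [abs_of_nonneg (by linarith [ht.2] : (0:ℝ) ≤ 1 - t)]
      linarith [ht.1]
    have hGmeas : AEStronglyMeasurable (fun t => |f' (a + t * c)|)
        (volume.restrict (Set.Ioc (1/2:ℝ) (1:ℝ))) := by
      refine AEStronglyMeasurable.congr (hφmeas.abs.aestronglyMeasurable) ?_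
      rw [Filter.EventuallyEq, ae_restrict_iff' measurableSet_Ioc]
      exact Filter.Eventually.of_forall fun t ht => by rw [hφeq t (hsub ht)]
    have hGmem : MemLp (fun t => |f' (a + t * c)|) (ENNReal.ofReal q)
        (volume.restrict (Set.Ioc (1/2:ℝ) (1:ℝ))) := by
      apply MemLp.of_bound hGmeas M
      rw [ae_restrict_iff' measurableSet_Ioc]
      refine Filter.Eventually.of_forall fun t ht => ?_
      rw [Real.norm_eq_abs, abs_abs]
      exact hMbound t (hsub ht)
    have hf_nn : (0 : ℝ → ℝ) ≤ᵐ[volume.restrict (Set.Ioc (1/2:ℝ) (1:ℝ))]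
        fun t : ℝ => 1 - t := by
      rw [Filter.EventuallyLE, ae_restrict_iff' measurableSet_Ioc]
      refine Filter.Eventually.of_forall fun t ht => ?_
      simp only [Pi.zero_apply]
      linarith [ht.2]
    have hg_nn : (0 : ℝ → ℝ) ≤ᵐ[volume.restrict (Set.Ioc (1/2:ℝ) (1:ℝ))]
        fun t => |f' (a + t * c)| :=
      Filter.Eventually.of_forall fun t => abs_nonneg _
    have hHold := MeasureTheory.integral_mul_le_Lp_mul_Lq_of_nonneg hpq hf_nn hg_nn hFmem hGmem
    have e2 : (∫ t in Set.Ioc (1/2:ℝ) (1:ℝ), (1 - t) ^ p) = D := by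
      rw [← intervalIntegral.integral_of_le (by norm_num : (1/2:ℝ) ≤ 1)]
      have hcs := intervalIntegral.integral_comp_sub_left (a := (1/2:ℝ)) (b := (1:ℝ))
        (fun u : ℝ => u ^ p) 1
      norm_num at hcs
      rw [hcs, integral_rpow (Or.inl (by linarith : (-1:ℝ) < p)),
        Real.zero_rpow (by positivity : p + 1 ≠ 0), sub_zero, hDdef]
    have hGq_nn : 0 ≤ ∫ t in Set.Ioc (1/2:ℝ) (1:ℝ), |f' (a + t * c)| ^ q :=
      setIntegral_nonneg measurableSet_Ioc fun t _ => Real.rpow_nonneg (abs_nonneg _) _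
    have e3 : (∫ t in Set.Ioc (1/2:ℝ) (1:ℝ), |f' (a + t * c)| ^ q) ≤ (A + 3 * B)/8 := by
      rw [← intervalIntegral.integral_of_le (by norm_num : (1/2:ℝ) ≤ 1)]
      calc (∫ t in (1/2:ℝ)..(1:ℝ), |f' (a + t * c)| ^ q)
          ≤ ∫ t in (1/2:ℝ)..(1:ℝ), ((1 - t) * A + t * B) :=
            intervalIntegral.integral_mono_on (by norm_num)
              (hGqint (1/2) 1 (by norm_num) (by norm_num) le_rfl)
              (Continuous.intervalIntegrable (by fun_prop) _ _)
              (fun t ht => hpre t ⟨le_trans (by norm_num) ht.1, ht.2⟩)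
        _ = (A + 3 * B)/8 := by rw [hquad]; ring
    calc |∫ t in (1/2:ℝ)..(1:ℝ), (t - 1) * (f' (a + t * c) * c)|
        ≤ ∫ t in (1/2:ℝ)..(1:ℝ), |(t - 1) * (f' (a + t * c) * c)| := h0
      _ = c * ∫ t in (1/2:ℝ)..(1:ℝ), (1 - t) * |f' (a + t * c)| := h1
      _ = c * ∫ t in Set.Ioc (1/2:ℝ) (1:ℝ), (1 - t) * |f' (a + t * c)| := by
          rw [intervalIntegral.integral_of_le (by norm_num : (1/2:ℝ) ≤ 1)]
      _ ≤ c * ((∫ t in Set.Ioc (1/2:ℝ) (1:ℝ), (1 - t) ^ p) ^ (1/p)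
            * (∫ t in Set.Ioc (1/2:ℝ) (1:ℝ), |f' (a + t * c)| ^ q) ^ (1/q)) :=
          mul_le_mul_of_nonneg_left hHold (le_of_lt hη)
      _ ≤ c * (D ^ (1/p) * ((A + 3 * B)/8) ^ (1/q)) := by
          rw [e2]
          exact mul_le_mul_of_nonneg_left
            (mul_le_mul_of_nonneg_left
              (Real.rpow_le_rpow hGq_nn e3 (by positivity))
              (Real.rpow_nonneg hD0.le _)) (le_of_lt hη)
  -- final assembly
  have h3q : (0:ℝ) ≤ (3:ℝ) ^ (1/q) := Real.rpow_nonneg (by norm_num) _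
  have hDp : (0:ℝ) ≤ D ^ (1/p) := Real.rpow_nonneg hD0.le _
  have key1 : ((3 * A + B)/8 : ℝ) ^ (1/q)
      ≤ ((3:ℝ) ^ (1/q) * |f' a| + |f' b|) * ((1:ℝ)/8) ^ (1/q) := by
    rw [show ((3 * A + B)/8 : ℝ) = (3 * A + B) * (1/8) by ring,
      Real.mul_rpow (by positivity) (by norm_num)]
    refine mul_le_mul_of_nonneg_right ?_ (Real.rpow_nonneg (by norm_num) _)
    calc (3 * A + B) ^ (1/q) ≤ (3 * A) ^ (1/q) + B ^ (1/q) :=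
          aux_subadd (by positivity) hB0 hsq0 hsq1
      _ = (3:ℝ) ^ (1/q) * |f' a| + |f' b| := by
          rw [Real.mul_rpow (by norm_num) hA0, hAs, hBs]
  have key2 : ((A + 3 * B)/8 : ℝ) ^ (1/q)
      ≤ (|f' a| + (3:ℝ) ^ (1/q) * |f' b|) * ((1:ℝ)/8) ^ (1/q) := by
    rw [show ((A + 3 * B)/8 : ℝ) = (A + 3 * B) * (1/8) by ring,
      Real.mul_rpow (by positivity) (by norm_num)]
    refine mul_le_mul_of_nonneg_right ?_ (Real.rpow_nonneg (by norm_num) _)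
    calc (A + 3 * B) ^ (1/q) ≤ A ^ (1/q) + (3 * B) ^ (1/q) :=
          aux_subadd hA0 (by positivity) hsq0 hsq1
      _ = |f' a| + (3:ℝ) ^ (1/q) * |f' b| := by
          rw [Real.mul_rpow (by norm_num) hB0, hAs, hBs]
  refine le_trans (abs_add_le _ _) ?_
  refine le_trans (add_le_add hbound1 hbound2) ?_
  refine le_trans (add_le_add
    (mul_le_mul_of_nonneg_left (mul_le_mul_of_nonneg_left key1 hDp) hη.le)
    (mul_le_mul_of_nonneg_left (mul_le_mul_of_nonneg_left key2 hDp) hη.le)) ?_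
  have hfin : c * (D ^ (1/p) * (((3:ℝ) ^ (1/q) * |f' a| + |f' b|) * ((1:ℝ)/8) ^ (1/q)))
      + c * (D ^ (1/p) * ((|f' a| + (3:ℝ) ^ (1/q) * |f' b|) * ((1:ℝ)/8) ^ (1/q)))
      = c * (D ^ (1/p) * ((1:ℝ)/8) ^ (1/q)) * (((3:ℝ) ^ (1/q) + 1) * (|f' a| + |f' b|)) := by
    ring
  rw [hfin, hs, hDdef, aux_const hp]
  apply le_of_eq
  ring
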